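/- Let S be a numerical semigroup. Then l(S) = 0 if and only if PF(S) = {F(S)}, and l(S) = 1 if and only if PF(S) = {F(S), F(S)/2}. -/

import Mathlib

def IsNumericalSemigroup (S : Set ℕ) : Prop :=
  0 ∈ S ∧ (∀ a ∈ S, ∀ b ∈ S, a + b ∈ S) ∧ Sᶜ.Finite

noncomputable def frobNS (S : Set ℕ) : ℤ :=
  sSup (insert (-1) ((fun n : ℕ => (n : ℤ)) '' Sᶜ))

def toZNS (S : Set ℕ) : Set ℤ := {z : ℤ | ∃ n ∈ S, (n : ℤ) = z}

noncomputable def genusNS (S : Set ℕ) : ℕ := Sᶜ.ncard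

def smallNS (S : Set ℕ) : Set ℕ := {s ∈ S | (s : ℤ) < frobNS S}

noncomputable def nNS (S : Set ℕ) : ℕ := (smallNS S).ncard

def LgapsNS (S : Set ℕ) : Set ℕ :=
  {x : ℕ | x ∉ S ∧ frobNS S - (x : ℤ) ∉ toZNS (smallNS S)}

noncomputable def lNS (S : Set ℕ) : ℕ := (LgapsNS S).ncard

noncomputable def hNS (S : Set ℕ) : ℕ := sSup (LgapsNS S)

def PFNS (S : Set ℕ) : Set ℤ :=
  {x : ℤ | x ∉ toZNS S ∧ ∀ s ∈ S, s ≠ 0 → x + (s : ℤ) ∈ toZNS S}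

noncomputable def typeNS (S : Set ℕ) : ℕ := (PFNS S).ncard

def msgNS (S : Set ℕ) : Set ℕ :=
  {x : ℕ | x ∈ S ∧ x ≠ 0 ∧ ∀ a ∈ S, ∀ b ∈ S, a ≠ 0 → b ≠ 0 → a + b ≠ x}

noncomputable def multNS (S : Set ℕ) : ℕ := sInf (S \ {0})

def IsIrreducibleNS (S : Set ℕ) : Prop :=
  IsNumericalSemigroup S ∧
    ¬ ∃ T₁ T₂ : Set ℕ, IsNumericalSemigroup T₁ ∧ IsNumericalSemigroup T₂ ∧
        S ⊂ T₁ ∧ S ⊂ T₂ ∧ S = T₁ ∩ T₂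

def IsSymmetricNS (S : Set ℕ) : Prop := IsIrreducibleNS S ∧ Odd (frobNS S)

def IsPseudoSymmetricNS (S : Set ℕ) : Prop := IsIrreducibleNS S ∧ Even (frobNS S)

def genNS (A : Set ℕ) : Set ℕ := (AddSubmonoid.closure A : Set ℕ)

def IsURSYNS (S : Set ℕ) : Prop :=
  ∃ T : Set ℕ, ∃ x : ℕ, IsSymmetricNS T ∧ x ∈ msgNS T ∧ S = T \ {x}

def IsURPSYNS (S : Set ℕ) : Prop :=
  ∃ T : Set ℕ, ∃ x : ℕ, IsPseudoSymmetricNS T ∧ x ∈ msgNS T ∧ S = T \ {x}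

def deltaNS (S : Set ℕ) : Set ℕ := {s ∈ S | 2 * (s : ℤ) < frobNS S}

def thetaNS (S : Set ℕ) : Set ℕ :=
  genNS (deltaNS S) ∪ {n : ℕ | frobNS S < (n : ℤ)}

noncomputable def CNS (F : ℕ) : Set ℕ :=
  if Odd F then (({0} : Set ℕ) ∪ {n : ℕ | (F + 1) / 2 ≤ n}) \ {F}
  else (({0} : Set ℕ) ∪ {n : ℕ | F / 2 + 1 ≤ n}) \ {F}

section Aux3
variable {S : Set ℕ}

lemma memToZ3 {n : ℕ} : (n : ℤ) ∈ toZNS S ↔ n ∈ S := by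
  constructor
  · rintro ⟨m, hm, hmn⟩
    have : m = n := by exact_mod_cast hmn
    rwa [this] at hm
  · exact fun h => ⟨n, h, rfl⟩

lemma frob_spec3 (hfin : Sᶜ.Finite) (hne : Sᶜ.Nonempty) :
    ∃ f : ℕ, frobNS S = (f : ℤ) ∧ f ∉ S ∧ ∀ x : ℕ, x ∉ S → x ≤ f := by
  have hfin' : (insert (-1) ((fun n : ℕ => (n : ℤ)) '' Sᶜ)).Finite :=
    (hfin.image _).insert _
  have hne' : (insert (-1) ((fun n : ℕ => (n : ℤ)) '' Sᶜ)).Nonempty := ⟨-1, Set.mem_insert _ _⟩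
  have hmem := hne'.csSup_mem hfin'
  have hbdd := hfin'.bddAbove
  obtain ⟨g, hg⟩ := hne
  have hge : (g : ℤ) ≤ frobNS S :=
    le_csSup hbdd (Set.mem_insert_of_mem _ ⟨g, hg, rfl⟩)
  have hmem' : frobNS S ∈ insert (-1) ((fun n : ℕ => (n : ℤ)) '' Sᶜ) := hmem
  rcases hmem' with h | ⟨f, hfS, hfe⟩
  · exfalso; rw [h] at hge; omega
  · refine ⟨f, hfe.symm, hfS, fun x hx => ?_⟩
    have : (x : ℤ) ≤ frobNS S := le_csSup hbdd (Set.mem_insert_of_mem _ ⟨x, hx, rfl⟩)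
    rw [← hfe] at this
    exact Nat.cast_le.1 this

lemma main3 (h0 : 0 ∈ S) (hadd : ∀ a ∈ S, ∀ b ∈ S, a + b ∈ S) (hfin : Sᶜ.Finite)
    (f : ℕ) (hF : frobNS S = (f : ℤ)) (hf : f ∉ S) (hub : ∀ x : ℕ, x ∉ S → x ≤ f) :
    (lNS S = 0 ↔ PFNS S = {frobNS S}) ∧
    (lNS S = 1 ↔ ∃ c : ℤ, frobNS S = 2 * c ∧ PFNS S = {frobNS S, c}) := by
  have hf1 : 1 ≤ f := Nat.one_le_iff_ne_zero.2 fun h => hf (h ▸ h0)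
  have hLchar : ∀ x : ℕ, x ∈ LgapsNS S ↔ x ∉ S ∧ f - x ∉ S := by
    intro x
    constructor
    · rintro ⟨hx, h2⟩
      refine ⟨hx, fun hfx => h2 ?_⟩
      have hxle := hub x hx
      have hx1 : 1 ≤ x := Nat.one_le_iff_ne_zero.2 fun h => hx (h ▸ h0)
      refine ⟨f - x, ⟨hfx, ?_⟩, ?_⟩
      · rw [hF]
        have : f - x < f := by omega
        exact_mod_cast this
      · rw [hF]
        exact Nat.cast_sub hxle
    · rintro ⟨hx, h2⟩
      refine ⟨hx, ?_⟩
      rintro ⟨n, ⟨hnS, -⟩, heq⟩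
      rw [hF] at heq
      have hxle := hub x hx
      have hn : n = f - x := by omega
      exact h2 (hn ▸ hnS)
  have hLfin : (LgapsNS S).Finite :=
    hfin.subset fun x hx => ((hLchar x).1 hx).1
  have hLsymm : ∀ x ∈ LgapsNS S, f - x ∈ LgapsNS S := by
    intro x hx
    rw [hLchar] at hx ⊢
    have hxle := hub x hx.1
    refine ⟨hx.2, ?_⟩
    have h2 : f - (f - x) = x := by omega
    rw [h2]
    exact hx.1
  have hFnotL : f ∉ LgapsNS S := by
    intro h
    have := ((hLchar f).1 h).2
    rw [Nat.sub_self] at this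
    exact this h0
  have hstep : ∀ x ∈ LgapsNS S, ∀ s ∈ S, s ≠ 0 → x + s ∉ S → x + s ∈ LgapsNS S := by
    intro x hx s hs hs0 hxs
    rw [hLchar] at hx ⊢
    refine ⟨hxs, fun h => ?_⟩
    have h1 := hub _ hxs
    have h2 : f - (x + s) + s = f - x := by omega
    exact hx.2 (h2 ▸ hadd _ h s hs)
  have hmaxPF : ∀ x ∈ LgapsNS S, (∀ y ∈ LgapsNS S, y ≤ x) → (x : ℤ) ∈ PFNS S := by
    intro x hx hmax
    constructor
    · rw [memToZ3]; exact ((hLchar x).1 hx).1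
    · intro s hs hs0
      by_cases h : x + s ∈ S
      · exact ⟨x + s, h, by push_cast; ring⟩
      · exfalso
        have := hmax _ (hstep x hx s hs hs0 h)
        omega
  have hFPF : (f : ℤ) ∈ PFNS S := by
    constructor
    · rw [memToZ3]; exact hf
    · intro s hs hs0
      by_cases h : f + s ∈ S
      · exact ⟨f + s, h, by push_cast; ring⟩
      · exact absurd (hub _ h) (by omega)
  have hPFcases : ∀ x ∈ PFNS S, x = (f : ℤ) ∨ ∃ n : ℕ, x = (n : ℤ) ∧ n ∈ LgapsNS S := by
    intro x hx
    obtain ⟨hx1, hx2⟩ := hx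
    have hx0 : 0 ≤ x := by
      by_contra h
      push_neg at h
      set t : ℕ := f + (-x).toNat with ht
      have htS : t ∈ S := by
        by_contra hc
        have := hub t hc
        omega
      have ht0 : t ≠ 0 := by omega
      obtain ⟨n, hnS, hneq⟩ := hx2 t htS ht0
      have hn : n = f := by omega
      exact hf (hn ▸ hnS)
    obtain ⟨n, rfl⟩ := Int.eq_ofNat_of_zero_le hx0
    have hnS : n ∉ S := fun h => hx1 (memToZ3.2 h)
    by_cases hnf : n = f
    · left; exact_mod_cast hnf
    · right
      refine ⟨n, rfl, (hLchar n).2 ⟨hnS, fun hfn => ?_⟩⟩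
      have hle := hub n hnS
      have hne0 : f - n ≠ 0 := by omega
      obtain ⟨m, hmS, hmeq⟩ := hx2 (f - n) hfn hne0
      have hm : m = f := by omega
      exact hf (hm ▸ hmS)
  have hmaxex : (LgapsNS S).Nonempty → ∃ x ∈ LgapsNS S, ∀ y ∈ LgapsNS S, y ≤ x := by
    intro hne
    obtain ⟨x, hx, hmax⟩ := Set.Finite.exists_maximalFor id _ hLfin hne
    refine ⟨x, hx, fun y hy => ?_⟩
    rcases le_total y x with h | h
    · exact h
    · exact (hmax hy h).ge
  constructor
  · constructor
    · intro hl
      have hl' : (LgapsNS S).ncard = 0 := hl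
      have hLempty : LgapsNS S = ∅ := (Set.ncard_eq_zero hLfin).1 hl'
      rw [hF]
      apply Set.eq_singleton_iff_unique_mem.2
      refine ⟨hFPF, fun x hx => ?_⟩
      rcases hPFcases x hx with h | ⟨n, rfl, hn⟩
      · exact h
      · exact absurd hn (by rw [hLempty]; exact Set.notMem_empty n)
    · intro hPF
      have hLempty : LgapsNS S = ∅ := by
        by_contra h
        obtain ⟨x, hxL, hxmax⟩ := hmaxex (Set.nonempty_iff_ne_empty.2 h)
        have hxPF := hmaxPF x hxL hxmax
        rw [hPF, hF, Set.mem_singleton_iff] at hxPF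
        have : x = f := by exact_mod_cast hxPF
        exact hFnotL (this ▸ hxL)
      show (LgapsNS S).ncard = 0
      rw [hLempty, Set.ncard_empty]
  · constructor
    · intro hl
      have hl' : (LgapsNS S).ncard = 1 := hl
      obtain ⟨a, ha⟩ := Set.ncard_eq_one.1 hl'
      have haL : a ∈ LgapsNS S := by rw [ha]; exact rfl
      have hfa : f - a ∈ LgapsNS S := hLsymm a haL
      have hfaa : f - a = a := by rw [ha, Set.mem_singleton_iff] at hfa; exact hfa
      have haS : a ∉ S := ((hLchar a).1 haL).1
      have hale : a ≤ f := hub a haS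
      have ha1 : 1 ≤ a := Nat.one_le_iff_ne_zero.2 fun h => haS (h ▸ h0)
      have hfeq : f = 2 * a := by omega
      refine ⟨(a : ℤ), by rw [hF]; exact_mod_cast hfeq, ?_⟩
      rw [hF]
      apply Set.Subset.antisymm
      · intro x hx
        rcases hPFcases x hx with h | ⟨n, rfl, hn⟩
        · exact Or.inl h
        · right
          rw [ha, Set.mem_singleton_iff] at hn
          rw [hn]
          rfl
      · rintro x (rfl | hx)
        · exact hFPF
        · rw [Set.mem_singleton_iff] at hx
          subst hx
          constructor
          · rw [memToZ3]; exact haS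
          · intro s hs hs0
            by_cases h : a + s ∈ S
            · exact ⟨a + s, h, by push_cast; ring⟩
            · exfalso
              have := hstep a haL s hs hs0 h
              rw [ha, Set.mem_singleton_iff] at this
              omega
    · rintro ⟨c, hc, hPF⟩
      rw [hF] at hc
      have hc0 : 0 ≤ c := by omega
      set a : ℕ := c.toNat with hadef
      have hca : (a : ℤ) = c := Int.toNat_of_nonneg hc0
      have hfa : f = 2 * a := by omega
      have hcPF : c ∈ PFNS S := by rw [hPF]; right; rfl
      have haS : a ∉ S := fun h => hcPF.1 (hca ▸ memToZ3.2 h)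
      have haL : a ∈ LgapsNS S := by
        rw [hLchar]
        have h2 : f - a = a := by omega
        rw [h2]
        exact ⟨haS, haS⟩
      have hLeq : LgapsNS S = {a} := by
        apply Set.Subset.antisymm
        · intro y hy
          obtain ⟨x, hxL, hxmax⟩ := hmaxex ⟨y, hy⟩
          have hxPF := hmaxPF x hxL hxmax
          rw [hPF] at hxPF
          have hxa : x = a := by
            rcases hxPF with h | h
            · exfalso
              rw [hF] at h
              have : x = f := by exact_mod_cast h
              exact hFnotL (this ▸ hxL)
            · rw [Set.mem_singleton_iff] at h
              rw [← hca] at h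
              exact_mod_cast h
          have hyx := hxmax y hy
          have hfyx := hxmax _ (hLsymm y hy)
          have hyS : y ∉ S := ((hLchar y).1 hy).1
          have hyle := hub y hyS
          have : y = a := by omega
          rw [this]; rfl
        · intro y hy
          rw [Set.mem_singleton_iff] at hy
          rw [hy]; exact haL
      show (LgapsNS S).ncard = 1
      rw [hLeq, Set.ncard_singleton]

end Aux3

/-- l(S) = 0 iff PF(S) = {F(S)}, and l(S) = 1 iff PF(S) = {F(S), F(S)/2}. -/
theorem stmt3 (S : Set ℕ) (hS : IsNumericalSemigroup S) :
    (lNS S = 0 ↔ PFNS S = {frobNS S}) ∧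
    (lNS S = 1 ↔ ∃ c : ℤ, frobNS S = 2 * c ∧ PFNS S = {frobNS S, c}) := by
  obtain ⟨h0, hadd, hfin⟩ := hS
  rcases Set.eq_empty_or_nonempty Sᶜ with hne | hne
  · have hSu : S = Set.univ := by rwa [Set.compl_empty_iff] at hne
    have hFv : frobNS S = -1 := by
      unfold frobNS
      rw [hne, Set.image_empty]
      simp only [LawfulSingleton.insert_empty_eq]
      exact csSup_singleton _
    have hLv : LgapsNS S = ∅ := by
      ext x
      simp [LgapsNS, hSu]
    have hl0 : lNS S = 0 := by
      show (LgapsNS S).ncard = 0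
      rw [hLv, Set.ncard_empty]
    have hPFv : PFNS S = {-1} := by
      ext x
      simp only [PFNS, Set.mem_setOf_eq, Set.mem_singleton_iff]
      constructor
      · rintro ⟨h1, h2⟩
        have hx0 : x < 0 := by
          by_contra h
          push_neg at h
          exact h1 ⟨x.toNat, by simp [hSu], by omega⟩
        obtain ⟨n, -, hn⟩ := h2 1 (by simp [hSu]) one_ne_zero
        omega
      · rintro rfl
        refine ⟨?_, fun s hs hs0 => ⟨s - 1, by simp [hSu], by omega⟩⟩
        rintro ⟨n, -, hn⟩
        omega
    constructor
    · rw [hl0, hPFv, hFv]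
      simp
    · constructor
      · intro h; rw [hl0] at h; omega
      · rintro ⟨c, hc, -⟩
        rw [hFv] at hc
        omega
  · obtain ⟨f, hF, hf, hub⟩ := frob_spec3 hfin hne
    exact main3 h0 hadd hfin f hF hf hub
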